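/- Define inductively the matching relation w ⊢ P ⇒ V for regular expression patterns P (with first-match rule for + and longest-match rule for *·, as in the paper's Figure 2). Then for all words w and patterns P: there exists V with w ⊢ P ⇒ V if and only if w ∈ L(P). -/

import Mathlib

/-- Regular expression patterns over an alphabet `A`. -/
inductive Pat (A : Type) : Type
  | eps : Pat A
  | ch : A → Pat A
  | plus : Pat A → Pat A → Pat A
  | cat : Pat A → Pat A → Pat A
  | star : Pat A → Pat A

/-- The language of a pattern (the usual regular-expression language). -/
def Pat.lang {A : Type} : Pat A → Language A
  | .eps => 1
  | .ch a => {[a]}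
  | .plus p q => p.lang + q.lang
  | .cat p q => p.lang * q.lang
  | .star p => KStar.kstar p.lang

/-- Node addresses in the syntax tree of a pattern: `[]` is the root, `1 :: n`
addresses node `n` in the left child, `2 :: n` in the right child. -/
abbrev Node := List ℕ

/-- Bindable nodes: nodes of the syntax tree having no `*`-labeled ancestor
(the root is always bindable; below a `star` nothing is bindable). -/
def Pat.Bindable {A : Type} : Pat A → Node → Prop
  | _, [] => True
  | .plus p _, 1 :: n => p.Bindable n
  | .plus _ q, 2 :: n => q.Bindable n
  | .cat p _, 1 :: n => p.Bindable n
  | .cat _ q, 2 :: n => q.Bindable n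
  | _, _ => False

/-- Associations: a map from node addresses to a matched subword (`some w`) or
`⊥` (`none`). -/
abbrev Assoc (A : Type) := Node → Option (List A)

/-- The association `[λ → w]` binding only the root. -/
def single {A : Type} (w : List A) : Assoc A :=
  fun n => if n = [] then some w else none

/-- `V + P₂`: push the associations of `V` into the left branch of a
disjunction; all nodes of the right branch get `⊥`. -/
def orL {A : Type} (V : Assoc A) : Assoc A
  | [] => V []
  | 1 :: m => V m
  | _ => none

/-- `P₁ + V`: push the associations of `V` into the right branch of a
disjunction; all nodes of the left branch get `⊥`. -/
def orR {A : Type} (V : Assoc A) : Assoc A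
  | [] => V []
  | 2 :: m => V m
  | _ => none

/-- `V₁ · V₂`: the association for a concatenation node. -/
def catA {A : Type} (V₁ V₂ : Assoc A) : Assoc A
  | [] => match V₁ [], V₂ [] with
          | some u, some v => some (u ++ v)
          | _, _ => none
  | 1 :: m => V₁ m
  | 2 :: m => V₂ m
  | _ => none

mutual
/-- The matching relation `w ⊢ P ⇒ V` of the paper's Figure 2, with the
first-match policy for `+` (rules Or2/COr2) and the longest-match policy for
Kleene star in a concatenation (rule CKleene). -/
inductive Match {A : Type} : List A → Pat A → Assoc A → Prop
  | empty : Match [] .eps (single [])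
  | lab (a : A) : Match [a] (.ch a) (single [a])
  | kleeneEmpty (P : Pat A) : Match [] (.star P) (single [])
  | kleeneClosure {w₁ w₂ : List A} {P : Pat A} {V₁ V₂ : Assoc A} :
      Match w₁ P V₁ → Match w₂ (.star P) V₂ → w₁ ≠ [] →
      Match (w₁ ++ w₂) (.star P) (single (w₁ ++ w₂))
  | or1 {w : List A} {P₁ P₂ : Pat A} {V : Assoc A} :
      Match w P₁ V → Match w (.plus P₁ P₂) (orL V)
  | or2 {w : List A} {P₁ P₂ : Pat A} {V : Assoc A} :
      Match w P₂ V → w ∉ P₁.lang → Match w (.plus P₁ P₂) (orR V)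
  | celem {w₁ w₂ : List A} {P₁ P₂ : Pat A} {V₁ V₂ : Assoc A} :
      CMatch w₁ w₂ P₁ P₂ V₁ V₂ → Match (w₁ ++ w₂) (.cat P₁ P₂) (catA V₁ V₂)

/-- The auxiliary relation `(w₁, w₂) ⊢ P₁ · P₂ ⇒ (V₁, V₂)`: when matching
`w₁w₂` against `P₁ · P₂`, pattern `P₁` matches `w₁` yielding `V₁` and `P₂`
matches `w₂` yielding `V₂`. -/
inductive CMatch {A : Type} : List A → List A → Pat A → Pat A → Assoc A → Assoc A → Prop
  | cempty {w : List A} {P : Pat A} {V₂ : Assoc A} :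
      Match w P V₂ → CMatch [] w .eps P (single []) V₂
  | clab {a : A} {w : List A} {P : Pat A} {V₁ V₂ : Assoc A} :
      Match [a] (.ch a) V₁ → Match w P V₂ → CMatch [a] w (.ch a) P V₁ V₂
  | cor1 {w₁ w₂ : List A} {P₁ P₂ P₃ : Pat A} {V₁ V₂ : Assoc A} :
      CMatch w₁ w₂ P₁ P₃ V₁ V₂ →
      CMatch w₁ w₂ (.plus P₁ P₂) P₃ (orL V₁) V₂
  | cor2 {w₁ w₂ : List A} {P₁ P₂ P₃ : Pat A} {V₁ V₂ : Assoc A} :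
      CMatch w₁ w₂ P₂ P₃ V₁ V₂ → w₁ ++ w₂ ∉ (Pat.cat P₁ P₃).lang →
      CMatch w₁ w₂ (.plus P₁ P₂) P₃ (orR V₁) V₂
  | ccon {w₁ w₂ w₃ : List A} {P₁ P₂ P₃ : Pat A} {V₁ V₂ V₃ W : Assoc A} :
      CMatch w₁ (w₂ ++ w₃) P₁ (.cat P₂ P₃) V₁ W →
      CMatch w₂ w₃ P₂ P₃ V₂ V₃ →
      CMatch (w₁ ++ w₂) w₃ (.cat P₁ P₂) P₃ (catA V₁ V₂) V₃
  | ckleene {w₁ w₂ : List A} {P₁ P₂ : Pat A} {V₁ V₂ : Assoc A} :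
      Match w₁ (.star P₁) V₁ → Match w₂ P₂ V₂ →
      (¬ ∃ w₃ w₄, w₃ ≠ [] ∧ w₂ = w₃ ++ w₄ ∧
        w₁ ++ w₃ ∈ (Pat.star P₁).lang ∧ w₄ ∈ P₂.lang) →
      CMatch w₁ w₂ (.star P₁) P₂ V₁ V₂
end

/-- The type of node `n` of pattern `P` relative to a context language `C`:
all subwords that `n` can be associated with when matching a word of `C`
against `P`. -/
def typeOf {A : Type} (n : Node) (P : Pat A) (C : Set (List A)) : Set (List A) :=
  {w | ∃ w' ∈ C, ∃ V, Match w' P V ∧ V n = some w}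

/-- Size measure for termination. -/
def Pat.sz {A : Type} : Pat A → ℕ
  | .eps => 1
  | .ch _ => 1
  | .plus p q => p.sz + q.sz + 1
  | .cat p q => 2 * p.sz + q.sz + 1
  | .star p => p.sz + 1

theorem match_sound {A : Type} {w : List A} {P : Pat A} {V : Assoc A}
    (h : Match w P V) : w ∈ P.lang := by
  refine Match.rec
    (motive_1 := fun w P _ _ => w ∈ P.lang)
    (motive_2 := fun w₁ w₂ P₁ P₂ _ _ _ => w₁ ∈ P₁.lang ∧ w₂ ∈ P₂.lang)
    ?_ ?_ ?_ ?_ ?_ ?_ ?_ ?_ ?_ ?_ ?_ ?_ ?_ h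
  · exact rfl
  · intro a; exact rfl
  · intro P; exact Language.nil_mem_kstar _
  · intro w₁ w₂ P V₁ V₂ h1 h2 hne ih1 ih2
    rcases Language.mem_kstar.mp ih2 with ⟨L, heq, hL⟩
    rw [heq]
    refine Language.mem_kstar.mpr ⟨_ :: L, rfl, ?_⟩
    intro y hy
    rcases List.mem_cons.mp hy with rfl | hy'
    · exact ih1
    · exact hL y hy'
  · intro w P₁ P₂ V h ih; exact Or.inl ih
  · intro w P₁ P₂ V h hn ih; exact Or.inr ih
  · intro w₁ w₂ P₁ P₂ V₁ V₂ hc ih; exact Language.append_mem_mul ih.1 ih.2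
  · intro w P V₂ h ih; exact ⟨rfl, ih⟩
  · intro a w P V₁ V₂ h1 h2 ih1 ih2; exact ⟨rfl, ih2⟩
  · intro w₁ w₂ P₁ P₂ P₃ V₁ V₂ hc ih; exact ⟨Or.inl ih.1, ih.2⟩
  · intro w₁ w₂ P₁ P₂ P₃ V₁ V₂ hc hn ih; exact ⟨Or.inr ih.1, ih.2⟩
  · intro w₁ w₂ w₃ P₁ P₂ P₃ V₁ V₂ V₃ W hc1 hc2 ih1 ih2
    exact ⟨Language.append_mem_mul ih1.1 ih2.1, ih2.2⟩
  · intro w₁ w₂ P₁ P₂ V₁ V₂ h1 h2 hn ih1 ih2; exact ⟨ih1, ih2⟩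

theorem cmatch_sound {A : Type} {w₁ w₂ : List A} {P₁ P₂ : Pat A} {V₁ V₂ : Assoc A}
    (h : CMatch w₁ w₂ P₁ P₂ V₁ V₂) : w₁ ∈ P₁.lang ∧ w₂ ∈ P₂.lang := by
  refine CMatch.rec
    (motive_1 := fun w P _ _ => w ∈ P.lang)
    (motive_2 := fun w₁ w₂ P₁ P₂ _ _ _ => w₁ ∈ P₁.lang ∧ w₂ ∈ P₂.lang)
    ?_ ?_ ?_ ?_ ?_ ?_ ?_ ?_ ?_ ?_ ?_ ?_ ?_ h
  · exact rfl
  · intro a; exact rfl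
  · intro P; exact Language.nil_mem_kstar _
  · intro w₁ w₂ P V₁ V₂ h1 h2 hne ih1 ih2
    rcases Language.mem_kstar.mp ih2 with ⟨L, heq, hL⟩
    rw [heq]
    refine Language.mem_kstar.mpr ⟨_ :: L, rfl, ?_⟩
    intro y hy
    rcases List.mem_cons.mp hy with rfl | hy'
    · exact ih1
    · exact hL y hy'
  · intro w P₁ P₂ V h ih; exact Or.inl ih
  · intro w P₁ P₂ V h hn ih; exact Or.inr ih
  · intro w₁ w₂ P₁ P₂ V₁ V₂ hc ih; exact Language.append_mem_mul ih.1 ih.2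
  · intro w P V₂ h ih; exact ⟨rfl, ih⟩
  · intro a w P V₁ V₂ h1 h2 ih1 ih2; exact ⟨rfl, ih2⟩
  · intro w₁ w₂ P₁ P₂ P₃ V₁ V₂ hc ih; exact ⟨Or.inl ih.1, ih.2⟩
  · intro w₁ w₂ P₁ P₂ P₃ V₁ V₂ hc hn ih; exact ⟨Or.inr ih.1, ih.2⟩
  · intro w₁ w₂ w₃ P₁ P₂ P₃ V₁ V₂ V₃ W hc1 hc2 ih1 ih2
    exact ⟨Language.append_mem_mul ih1.1 ih2.1, ih2.2⟩
  · intro w₁ w₂ P₁ P₂ V₁ V₂ h1 h2 hn ih1 ih2; exact ⟨ih1, ih2⟩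

mutual
theorem match_complete {A : Type} : ∀ (P : Pat A) (w : List A),
    w ∈ P.lang → ∃ V, Match w P V
  | .eps, w, h => by
      rw [Pat.lang, Language.mem_one] at h
      subst h
      exact ⟨_, .empty⟩
  | .ch a, w, h => by
      rw [Pat.lang] at h; change w = [a] at h
      subst h
      exact ⟨_, .lab a⟩
  | .plus P Q, w, h => by
      by_cases hw : w ∈ P.lang
      · obtain ⟨V, hV⟩ := match_complete P w hw
        exact ⟨_, .or1 hV⟩
      · obtain ⟨V, hV⟩ := match_complete Q w (h.resolve_left hw)
        exact ⟨_, .or2 hV hw⟩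
  | .cat P Q, w, h => by
      obtain ⟨w₁, w₂, V₁, V₂, rfl, hc⟩ := cmatch_complete P Q w h
      exact ⟨_, .celem hc⟩
  | .star P, w, h => by
      obtain ⟨S, rfl, hS⟩ := Language.mem_kstar_iff_exists_nonempty.mp h
      cases S with
      | nil => exact ⟨_, .kleeneEmpty P⟩
      | cons a S' =>
        obtain ⟨ha, hane⟩ := hS a (List.mem_cons_self ..)
        obtain ⟨V₁, hV₁⟩ := match_complete P a ha
        have hS' : S'.flatten ∈ (Pat.star P).lang :=
          Language.mem_kstar_iff_exists_nonempty.mpr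
            ⟨S', rfl, fun y hy => hS y (List.mem_cons_of_mem _ hy)⟩
        obtain ⟨V₂, hV₂⟩ := match_complete (.star P) S'.flatten hS'
        exact ⟨_, .kleeneClosure hV₁ hV₂ hane⟩
  termination_by P w _ => (P.sz, w.length)
  decreasing_by all_goals
    (try simp only [Pat.sz]
     first
       | (apply Prod.Lex.left; omega)
       | (apply Prod.Lex.right
          subst_vars
          simp only [List.flatten_cons, List.length_append]
          have : 0 < a.length := List.length_pos_iff.mpr hane
          omega))

theorem cmatch_complete {A : Type} : ∀ (P₁ P₂ : Pat A) (w : List A),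
    w ∈ (Pat.cat P₁ P₂).lang →
    ∃ w₁ w₂ V₁ V₂, w = w₁ ++ w₂ ∧ CMatch w₁ w₂ P₁ P₂ V₁ V₂
  | .eps, P₂, w, h => by
      have h' : w ∈ P₂.lang := by
        have he : (Pat.cat Pat.eps P₂).lang = P₂.lang := by
          show (1 : Language A) * _ = _
          rw [one_mul]
        rwa [he] at h
      obtain ⟨V₂, hV₂⟩ := match_complete P₂ w h'
      exact ⟨[], w, _, _, rfl, .cempty hV₂⟩
  | .ch a, P₂, w, h => by
      obtain ⟨u, hu, v, hv, rfl⟩ := Language.mem_mul.mp h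
      rw [Pat.lang] at hu; change u = [a] at hu
      subst hu
      obtain ⟨V₂, hV₂⟩ := match_complete P₂ v hv
      exact ⟨[a], v, _, _, rfl, .clab (.lab a) hV₂⟩
  | .plus Q₁ Q₂, P₂, w, h => by
      by_cases hw : w ∈ (Pat.cat Q₁ P₂).lang
      · obtain ⟨w₁, w₂, V₁, V₂, rfl, hc⟩ := cmatch_complete Q₁ P₂ w hw
        exact ⟨w₁, w₂, _, _, rfl, .cor1 hc⟩
      · have h2 : w ∈ (Pat.cat Q₂ P₂).lang := by
          have hd : (Pat.cat (Pat.plus Q₁ Q₂) P₂).lang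
              = (Pat.cat Q₁ P₂).lang + (Pat.cat Q₂ P₂).lang := by
            show (Q₁.lang + Q₂.lang) * _ = _
            rw [add_mul]
            rfl
          rw [hd] at h
          exact h.resolve_left hw
        obtain ⟨w₁, w₂, V₁, V₂, rfl, hc⟩ := cmatch_complete Q₂ P₂ w h2
        exact ⟨w₁, w₂, _, _, rfl, .cor2 hc hw⟩
  | .cat Q₁ Q₂, P₂, w, h => by
      have h' : w ∈ (Pat.cat Q₁ (Pat.cat Q₂ P₂)).lang := by
        have he : (Pat.cat (Pat.cat Q₁ Q₂) P₂).lang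
            = (Pat.cat Q₁ (Pat.cat Q₂ P₂)).lang := by
          show Q₁.lang * Q₂.lang * P₂.lang = Q₁.lang * (Q₂.lang * P₂.lang)
          rw [mul_assoc]
        rwa [he] at h
      obtain ⟨u, v, V₁, W, rfl, hc1⟩ := cmatch_complete Q₁ (.cat Q₂ P₂) w h'
      have hv : v ∈ (Pat.cat Q₂ P₂).lang := (cmatch_sound hc1).2
      obtain ⟨w₂, w₃, V₂, V₃, rfl, hc2⟩ := cmatch_complete Q₂ P₂ v hv
      exact ⟨u ++ w₂, w₃, _, _, by rw [List.append_assoc], .ccon hc1 hc2⟩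
  | .star Q, P₂, w, h => by
      classical
      obtain ⟨a, ha, b, hb, hab⟩ := Language.mem_mul.mp h
      set pred : ℕ → Prop := fun k =>
        w.take k ∈ (Pat.star Q).lang ∧ w.drop k ∈ P₂.lang with hpred
      have hm : pred a.length := by
        constructor
        · rw [← hab, List.take_left]; exact ha
        · rw [← hab, List.drop_left]; exact hb
      have hmle : a.length ≤ w.length := by
        rw [← hab, List.length_append]; omega
      set k := Nat.findGreatest pred w.length with hk
      have hpk : pred k := Nat.findGreatest_spec hmle hm
      have hkle : k ≤ w.length := Nat.findGreatest_le _
      obtain ⟨V₁, hV₁⟩ := match_complete (.star Q) (w.take k) hpk.1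
      obtain ⟨V₂, hV₂⟩ := match_complete P₂ (w.drop k) hpk.2
      refine ⟨w.take k, w.drop k, V₁, V₂, (List.take_append_drop k w).symm,
        .ckleene hV₁ hV₂ ?_⟩
      rintro ⟨w₃, w₄, hne, heq, h3, h4⟩
      have hlen : (w.take k).length = k := List.length_take_of_le hkle
      have hw : w = (w.take k ++ w₃) ++ w₄ := by
        rw [List.append_assoc, ← heq, List.take_append_drop]
      have hk'le : k + w₃.length ≤ w.length := by
        have hlw := congrArg List.length hw
        simp [List.length_append, hlen] at hlw
        omega
      have hpk' : pred (k + w₃.length) := by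
        have hlen' : (w.take k ++ w₃).length = k + w₃.length := by
          rw [List.length_append, hlen]
        constructor
        · rw [hw, ← hlen', List.take_left]; exact h3
        · rw [hw, ← hlen', List.drop_left]; exact h4
      have hgt : k < k + w₃.length := by
        have hz : w₃.length ≠ 0 := fun hz => hne (List.eq_nil_of_length_eq_zero hz)
        omega
      exact Nat.findGreatest_is_greatest hgt hk'le hpk'
  termination_by P₁ P₂ w _ => (2 * P₁.sz + P₂.sz, w.length)
  decreasing_by all_goals
    (try simp only [Pat.sz]
     first
       | (apply Prod.Lex.left; omega)
       | (apply Prod.Lex.right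
          subst_vars
          simp only [List.flatten_cons, List.length_append]
          have : 0 < a.length := List.length_pos_iff.mpr hane
          omega))
end

/-- For all words `w` and patterns `P`, there exists `V` with
`w ⊢ P ⇒ V` if and only if `w ∈ L(P)`. -/
theorem match_iff_mem_lang {A : Type} (w : List A) (P : Pat A) :
    (∃ V, Match w P V) ↔ w ∈ P.lang := by
  constructor
  · rintro ⟨V, hV⟩
    exact match_sound hV
  · intro h
    exact match_complete P w h
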